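/- arXiv:1001.2086 — 3 statements merged into one kernel-verified Lean document; each statement's English description precedes it below -/
import Mathlib

section
/- The isomorphism type of the shuffle sum Shuf(L) of a countable family of linear orders does not depend on the choice of the dense coloring: if c, c' : ℚ → I are two dense I-colorings, then Σ_{x∈ℚ} L_{c(x)} ≅ Σ_{x∈ℚ} L_{c'(x)}. -/
/-- `c : ℚ → I` is a dense `I`-coloring: every color occurs in every nonempty open
interval of `ℚ`. -/
def DenseColoring {I : Type} (c : ℚ → I) : Prop :=
  ∀ x y : ℚ, x < y → ∀ i : I, ∃ z : ℚ, x < z ∧ z < y ∧ c z = i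

namespace ShuffleAux

open Order

variable {I : Type}

/-- Colored version of `Order.exists_between_finsets`. -/
theorem exists_between_finsets_colored (c : ℚ → I) (hc : DenseColoring c)
    (lo hi : Finset ℚ) (lo_lt_hi : ∀ x ∈ lo, ∀ y ∈ hi, x < y) (i : I) :
    ∃ m : ℚ, c m = i ∧ (∀ x ∈ lo, x < m) ∧ ∀ y ∈ hi, m < y := by
  by_cases nlo : lo.Nonempty
  · by_cases nhi : hi.Nonempty
    · obtain ⟨m, hm1, hm2, hm3⟩ :=
        hc (lo.max' nlo) (hi.min' nhi)
          (lo_lt_hi _ (Finset.max'_mem _ nlo) _ (Finset.min'_mem _ nhi)) i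
      exact ⟨m, hm3, fun x hx => lt_of_le_of_lt (Finset.le_max' lo x hx) hm1,
        fun y hy => lt_of_lt_of_le hm2 (Finset.min'_le hi y hy)⟩
    · obtain ⟨m, hm1, _, hm3⟩ := hc (lo.max' nlo) (lo.max' nlo + 1) (by linarith) i
      exact ⟨m, hm3, fun x hx => lt_of_le_of_lt (Finset.le_max' lo x hx) hm1,
        fun y hy => (nhi ⟨y, hy⟩).elim⟩
  · by_cases nhi : hi.Nonempty
    · obtain ⟨m, _, hm2, hm3⟩ := hc (hi.min' nhi - 1) (hi.min' nhi) (by linarith) i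
      exact ⟨m, hm3, fun x hx => (nlo ⟨x, hx⟩).elim,
        fun y hy => lt_of_lt_of_le hm2 (Finset.min'_le hi y hy)⟩
    · obtain ⟨m, _, _, hm3⟩ := hc 0 1 (by norm_num) i
      exact ⟨m, hm3, fun x hx => (nlo ⟨x, hx⟩).elim, fun y hy => (nhi ⟨y, hy⟩).elim⟩

/-- Finite partial order isomorphisms of `ℚ` respecting the colorings `c`, `c'`. -/
def CPartialIso (c c' : ℚ → I) : Type :=
  { f : Finset (ℚ × ℚ) //
    (∀ p ∈ f, ∀ q ∈ f, cmp (Prod.fst p) (Prod.fst q) = cmp (Prod.snd p) (Prod.snd q)) ∧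
      ∀ p ∈ f, c' (Prod.snd p) = c (Prod.fst p) }

namespace CPartialIso

variable {c c' : ℚ → I}

instance : Inhabited (CPartialIso c c') :=
  ⟨⟨∅, fun _p h => (Finset.notMem_empty _ h).elim, fun _p h => (Finset.notMem_empty _ h).elim⟩⟩

instance : Preorder (CPartialIso c c') :=
  Subtype.preorder _

theorem exists_across (hc' : DenseColoring c') (f : CPartialIso c c') (a : ℚ) :
    ∃ b : ℚ, c' b = c a ∧ ∀ p ∈ f.val, cmp (Prod.fst p) a = cmp (Prod.snd p) b := by
  by_cases h : ∃ b, (a, b) ∈ f.val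
  · obtain ⟨b, hb⟩ := h
    exact ⟨b, f.prop.2 _ hb, fun p hp => f.prop.1 _ hp _ hb⟩
  have hord :
      ∀ x ∈ (f.val.filter fun p : ℚ × ℚ => p.fst < a).image Prod.snd,
        ∀ y ∈ (f.val.filter fun p : ℚ × ℚ => a < p.fst).image Prod.snd, x < y := by
    intro x hx y hy
    rw [Finset.mem_image] at hx hy
    rcases hx with ⟨p, hp1, rfl⟩
    rcases hy with ⟨q, hq1, rfl⟩
    rw [Finset.mem_filter] at hp1 hq1
    rw [← lt_iff_lt_of_cmp_eq_cmp (f.prop.1 _ hp1.1 _ hq1.1)]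
    exact lt_trans hp1.right hq1.right
  obtain ⟨b, hbc, hb, hb'⟩ := exists_between_finsets_colored c' hc' _ _ hord (c a)
  refine ⟨b, hbc, ?_⟩
  rintro ⟨p1, p2⟩ hp
  have hne : p1 ≠ a := fun he => h ⟨p2, he ▸ hp⟩
  rcases lt_or_gt_of_ne hne with hl | hr
  · have : p1 < a ∧ p2 < b :=
      ⟨hl, hb _ (Finset.mem_image.mpr ⟨(p1, p2), Finset.mem_filter.mpr ⟨hp, hl⟩, rfl⟩)⟩
    rw [← cmp_eq_lt_iff, ← cmp_eq_lt_iff] at this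
    exact this.1.trans this.2.symm
  · have : a < p1 ∧ b < p2 :=
      ⟨hr, hb' _ (Finset.mem_image.mpr ⟨(p1, p2), Finset.mem_filter.mpr ⟨hp, hr⟩, rfl⟩)⟩
    rw [← cmp_eq_gt_iff, ← cmp_eq_gt_iff] at this
    exact this.1.trans this.2.symm

/-- Swapping a colored partial isomorphism. -/
protected def comm (f : CPartialIso c c') : CPartialIso c' c := by
  refine ⟨f.val.image (Equiv.prodComm ℚ ℚ), ?_, ?_⟩
  · intro p hp q hq
    rw [Finset.mem_image] at hp hq
    obtain ⟨p', hp', rfl⟩ := hp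
    obtain ⟨q', hq', rfl⟩ := hq
    exact (f.prop.1 p' hp' q' hq').symm
  · intro p hp
    rw [Finset.mem_image] at hp
    obtain ⟨p', hp', rfl⟩ := hp
    exact (f.prop.2 p' hp').symm

theorem comm_comm (f : CPartialIso c c') : f.comm.comm = f := by
  apply Subtype.ext
  show (f.val.image _).image _ = f.val
  rw [Finset.image_image]
  have : ((Equiv.prodComm ℚ ℚ) ∘ (Equiv.prodComm ℚ ℚ) : ℚ × ℚ → ℚ × ℚ) = id := by
    funext p; simp
  rw [this, Finset.image_id]

theorem mem_comm {f : CPartialIso c c'} {a b : ℚ} (h : (a, b) ∈ f.val) :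
    (b, a) ∈ f.comm.val :=
  Finset.mem_image.mpr ⟨(a, b), h, rfl⟩

theorem comm_mono {f g : CPartialIso c c'} (h : f ≤ g) : f.comm ≤ g.comm :=
  Finset.image_subset_image h

/-- Partial isomorphisms defined at `a` on the left form a cofinal set. -/
def definedAtLeft (hc' : DenseColoring c') (a : ℚ) : Cofinal (CPartialIso c c') where
  carrier := {f | ∃ b : ℚ, (a, b) ∈ f.val}
  isCofinal f := by
    obtain ⟨b, hbc, a_b⟩ := exists_across hc' f a
    refine ⟨⟨insert (a, b) f.val, fun p hp q hq => ?_, fun p hp => ?_⟩,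
      ⟨b, Finset.mem_insert_self _ _⟩, Finset.subset_insert _ _⟩
    · rw [Finset.mem_insert] at hp hq
      rcases hp with (rfl | pf) <;> rcases hq with (rfl | qf)
      · simp only [cmp_self_eq_eq]
      · rw [cmp_eq_cmp_symm]
        exact a_b _ qf
      · exact a_b _ pf
      · exact f.prop.1 _ pf _ qf
    · rw [Finset.mem_insert] at hp
      rcases hp with (rfl | pf)
      · exact hbc
      · exact f.prop.2 _ pf

/-- Partial isomorphisms defined at `b` on the right form a cofinal set. -/
def definedAtRight (hc : DenseColoring c) (b : ℚ) : Cofinal (CPartialIso c c') where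
  carrier := {f | ∃ a : ℚ, (a, b) ∈ f.val}
  isCofinal f := by
    obtain ⟨f', ⟨a, ha⟩, hl⟩ := (definedAtLeft hc b).isCofinal f.comm
    refine ⟨f'.comm, ⟨a, mem_comm ha⟩, ?_⟩
    have := comm_mono hl
    rwa [comm_comm] at this

end CPartialIso

open CPartialIso in
/-- The colored back-and-forth theorem: two dense colorings of `ℚ` are conjugate by an
order automorphism. -/
theorem exists_colored_orderIso (c c' : ℚ → I) (hc : DenseColoring c) (hc' : DenseColoring c') :
    ∃ g : ℚ ≃o ℚ, ∀ x : ℚ, c' (g x) = c x := by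
  cases nonempty_encodable (ℚ ⊕ ℚ)
  let to_cofinal : ℚ ⊕ ℚ → Cofinal (CPartialIso c c') := fun p =>
    Sum.recOn p (definedAtLeft hc') (definedAtRight hc)
  let our_ideal : Order.Ideal (CPartialIso c c') := idealOfCofinals default to_cofinal
  have hF : ∀ a : ℚ, ∃ b : ℚ, ∃ f ∈ our_ideal, (a, b) ∈ f.val := by
    intro a
    obtain ⟨f, ⟨b, hb⟩, hf⟩ := cofinal_meets_idealOfCofinals default to_cofinal (Sum.inl a)
    exact ⟨b, f, hf, hb⟩
  have hG : ∀ b : ℚ, ∃ a : ℚ, ∃ f ∈ our_ideal, (a, b) ∈ f.val := by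
    intro b
    obtain ⟨f, ⟨a, ha⟩, hf⟩ := cofinal_meets_idealOfCofinals default to_cofinal (Sum.inr b)
    exact ⟨a, f, hf, ha⟩
  choose F hFmem using hF
  choose G hGmem using hG
  have key : ∀ a b : ℚ, cmp a (G b) = cmp (F a) b := by
    intro a b
    obtain ⟨f, hf, ha⟩ := hFmem a
    obtain ⟨g, hg, hb⟩ := hGmem b
    obtain ⟨m, _, fm, gm⟩ := our_ideal.directed _ hf _ hg
    exact m.prop.1 (a, _) (fm ha) (_, b) (gm hb)
  refine ⟨OrderIso.ofCmpEqCmp F G key, ?_⟩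
  intro x
  obtain ⟨f, _, hx⟩ := hFmem x
  exact f.prop.2 _ hx

end ShuffleAux

theorem cast_lt_cast_of_eq {I : Type} (L : I → Type) [∀ i, LinearOrder (L i)] {i j : I}
    (h : i = j) {a b : L i} (hab : a < b) :
    cast (congrArg L h) a < cast (congrArg L h) b := by
  subst h
  simpa using hab

/-- The isomorphism type of the shuffle sum of a countable family of linear orders
does not depend on the choice of the dense coloring. -/
theorem shuffle_well_defined {I : Type} [Countable I] (L : I → Type)
    [∀ i, LinearOrder (L i)] (c c' : ℚ → I)
    (hc : DenseColoring c) (hc' : DenseColoring c') :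
    Nonempty ((Lex ((x : ℚ) × L (c x))) ≃o (Lex ((x : ℚ) × L (c' x)))) := by
  obtain ⟨g, hg⟩ := ShuffleAux.exists_colored_orderIso c c' hc hc'
  -- Build the underlying equivalence.
  have hcg : ∀ x : ℚ, L (c x) = L (c' (g x)) := fun x => congrArg L (hg x).symm
  have hcg' : ∀ y : ℚ, L (c' y) = L (c (g.symm y)) := by
    intro y
    have : c' (g (g.symm y)) = c (g.symm y) := hg _
    rw [g.apply_symm_apply] at this
    exact congrArg L this
  let Fn : Lex ((x : ℚ) × L (c x)) → Lex ((x : ℚ) × L (c' x)) :=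
    fun p => toLex ⟨g (ofLex p).1, cast (hcg (ofLex p).1) (ofLex p).2⟩
  have hsurj : Function.Surjective Fn := by
    intro q
    refine ⟨toLex ⟨g.symm (ofLex q).1, cast (hcg' (ofLex q).1) (ofLex q).2⟩, ?_⟩
    show (⟨g (g.symm (ofLex q).1),
        cast (hcg (g.symm (ofLex q).1)) (cast (hcg' (ofLex q).1) (ofLex q).2)⟩ :
        Lex ((x : ℚ) × L (c' x))) = q
    refine Sigma.ext (g.apply_symm_apply (ofLex q).1) ?_
    exact (cast_heq _ _).trans (cast_heq _ _)
  have hmono : StrictMono Fn := by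
    intro a b hab
    rw [Sigma.Lex.lt_def] at hab ⊢
    rcases hab with h1 | ⟨h1, h2⟩
    · exact Or.inl (g.strictMono h1)
    · refine Or.inr ?_
      obtain ⟨x, la⟩ := a
      obtain ⟨x', lb⟩ := b
      dsimp at h1
      subst h1
      dsimp at h2
      refine ⟨rfl, ?_⟩
      exact cast_lt_cast_of_eq L (hg x).symm h2
  exact ⟨StrictMono.orderIsoOfSurjective _ hmono hsurj⟩
end

section
/- If the shuffle sum Shuf(L₁) of a countable class L₁ of linear orders, each of the form ω·i + K with ω·i not embeddable as an interval of K, contains an interval isomorphic to ω·(i+1), then some member of L₁ is of the form ω·(i+1) + K' for some linear order K'. -/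
open Sum

/-- congruence of lexicographic sums of linear orders -/
noncomputable def sumLexCongrIso {α β γ δ : Type*} [LinearOrder α] [LinearOrder β]
    [LinearOrder γ] [LinearOrder δ] (e₁ : α ≃o γ) (e₂ : β ≃o δ) :
    (α ⊕ₗ β) ≃o (γ ⊕ₗ δ) := by
  refine StrictMono.orderIsoOfSurjective
    (fun x => match ofLex x with
      | inl a => toLex (inl (e₁ a))
      | inr b => toLex (inr (e₂ b))) ?_ ?_
  · intro x y hxy
    rcases x with (a | b) <;> rcases y with (a' | b')
    · simp only
      exact Sum.Lex.inl_lt_inl_iff.2 (e₁.strictMono (Sum.Lex.inl_lt_inl_iff.1 hxy))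
    · exact Sum.Lex.inl_lt_inr _ _
    · exact absurd hxy Sum.Lex.not_inr_lt_inl
    · simp only
      exact Sum.Lex.inr_lt_inr_iff.2 (e₂.strictMono (Sum.Lex.inr_lt_inr_iff.1 hxy))
  · intro y
    rcases y with (cc | d)
    · exact ⟨toLex (inl (e₁.symm cc)), by simp; rfl⟩
    · exact ⟨toLex (inr (e₂.symm d)), by simp; rfl⟩

/-- A linear order splits as lexicographic sum along a downward-closed set. -/
noncomputable def splitIso {α : Type*} [LinearOrder α] (S : Set α)
    (hS : ∀ ⦃x y : α⦄, x ∈ S → y ≤ x → y ∈ S) :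
    α ≃o (↥S ⊕ₗ ↥(Sᶜ)) := by
  classical
  refine StrictMono.orderIsoOfSurjective
    (fun x => if h : x ∈ S then toLex (inl ⟨x, h⟩) else toLex (inr ⟨x, h⟩)) ?_ ?_
  · intro x y hxy
    by_cases hx : x ∈ S <;> by_cases hy : y ∈ S <;> simp only [hx, hy, dif_pos, dif_neg,
      not_false_iff]
    · exact Sum.Lex.inl_lt_inl_iff.2 hxy
    · exact Sum.Lex.inl_lt_inr _ _
    · exact absurd (hS hy hxy.le) hx
    · exact Sum.Lex.inr_lt_inr_iff.2 hxy
  · rintro (⟨x, hx⟩ | ⟨x, hx⟩)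
    · exact ⟨x, dif_pos hx⟩
    · exact ⟨x, dif_neg hx⟩

/-- `ω·i + ω = ω·(i+1)`. -/
noncomputable def omegaSuccIso (i : ℕ) :
    (Lex (Fin i × ℕ) ⊕ₗ ℕ) ≃o Lex (Fin (i + 1) × ℕ) := by
  refine StrictMono.orderIsoOfSurjective
    (fun x => match ofLex x with
      | inl p => toLex (Fin.castSucc (ofLex p).1, (ofLex p).2)
      | inr n => toLex (Fin.last i, n)) ?_ ?_
  · intro x y hxy
    rcases x with (p | n) <;> rcases y with (p' | n')
    · simp only
      rcases Prod.Lex.lt_iff.1 (Sum.Lex.inl_lt_inl_iff.1 hxy) with h | ⟨h1, h2⟩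
      · exact Prod.Lex.lt_iff.2 (Or.inl (Fin.castSucc_lt_castSucc_iff.2 h))
      · exact Prod.Lex.lt_iff.2 (Or.inr ⟨congrArg Fin.castSucc h1, h2⟩)
    · exact Prod.Lex.lt_iff.2 (Or.inl (Fin.castSucc_lt_last _))
    · exact absurd hxy Sum.Lex.not_inr_lt_inl
    · exact Prod.Lex.lt_iff.2 (Or.inr ⟨rfl, Sum.Lex.inr_lt_inr_iff.1 hxy⟩)
  · intro y
    rcases hy : ofLex y with ⟨a, n⟩
    by_cases ha : a = Fin.last i
    · refine ⟨toLex (inr n), ?_⟩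
      show toLex (Fin.last i, n) = y
      rw [← toLex_ofLex y, hy, ha]
    · refine ⟨toLex (inl (toLex (a.castPred ha, n))), ?_⟩
      show toLex ((a.castPred ha).castSucc, n) = y
      rw [← toLex_ofLex y, hy, Fin.castSucc_castPred]

theorem no_descending {α : Type*} [Preorder α] [WellFoundedLT α] (f : ℕ → α)
    (hf : ∀ n, f (n + 1) < f n) : False :=
  (RelEmbedding.natGT f hf).not_wellFounded wellFounded_lt

theorem lexWF (m : ℕ) : WellFoundedLT (Lex (Fin m × ℕ)) :=
  ⟨WellFounded.prod_lex wellFounded_lt wellFounded_lt⟩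

theorem lexType (m : ℕ) :
    haveI := lexWF m
    Ordinal.type ((· < ·) : Lex (Fin m × ℕ) → Lex (Fin m × ℕ) → Prop) =
      Ordinal.omega0 * m := by
  haveI := lexWF m
  show Ordinal.type (Prod.Lex ((· < ·) : Fin m → Fin m → Prop) ((· < ·) : ℕ → ℕ → Prop)) =
    Ordinal.omega0 * m
  rw [Ordinal.type_prod_lex, Ordinal.type_nat_lt, Ordinal.type_fin]

theorem no_emb (i : ℕ) (f : Lex (Fin (i + 1) × ℕ) ↪o Lex (Fin i × ℕ)) : False := by
  haveI := lexWF (i + 1)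
  haveI := lexWF i
  haveI i1 : IsWellOrder (Lex (Fin (i + 1) × ℕ)) (· < ·) := isWellOrder_lt
  haveI i2 : IsWellOrder (Lex (Fin i × ℕ)) (· < ·) := isWellOrder_lt
  have h1 : Ordinal.type ((· < ·) : Lex (Fin (i + 1) × ℕ) → Lex (Fin (i + 1) × ℕ) → Prop) ≤
      Ordinal.type ((· < ·) : Lex (Fin i × ℕ) → Lex (Fin i × ℕ) → Prop) :=
    @RelEmbedding.ordinal_type_le _ _ _ _ i1 i2 f.ltEmbedding
  rw [lexType (i + 1), lexType i] at h1
  have h3 : ((i : Ordinal.{0}) + 1) ≤ (i : Ordinal.{0}) := by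
    have hω : (0 : Ordinal) < Ordinal.omega0 := Ordinal.omega0_pos
    rw [mul_le_mul_iff_right₀ hω] at h1
    · simpa using h1
  exact absurd h3 (by simp)

theorem ordConnected_image {α β : Type*} [Preorder α] [Preorder β] (e : α ≃o β) {s : Set α}
    (hs : s.OrdConnected) : (e '' s).OrdConnected := by
  constructor
  rintro _ ⟨x, hx, rfl⟩ _ ⟨y, hy, rfl⟩ z ⟨hz1, hz2⟩
  refine ⟨e.symm z, hs.out hx hy ⟨?_, ?_⟩, by simp⟩
  · simpa using e.symm.monotone hz1
  · simpa using e.symm.monotone hz2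



/-- `L` is of the form `ω·i + K` where `ω·i` (here `Lex (Fin i × ℕ)`) is not isomorphic
to any interval of `K`. -/
def OmegaIPlus (i : ℕ) (L : Type) [LinearOrder L] : Prop :=
  ∃ (K : Type) (_ : LinearOrder K),
    Nonempty (L ≃o (Lex (Fin i × ℕ) ⊕ₗ K)) ∧
    ∀ s : Set K, s.OrdConnected → ¬ Nonempty (↥s ≃o Lex (Fin i × ℕ))

/-- If the shuffle sum of a countable class `L₁` of linear orders, each of the form
`ω·i + K` with `ω·i` not embeddable as an interval of `K`, contains an interval
isomorphic to `ω·(i+1)`, then some member of `L₁` is of the form `ω·(i+1) + K'`. -/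
theorem shuffle_interval_omega_succ {i : ℕ} (hi : 1 ≤ i) {ι : Type} [Countable ι]
    (L : ι → Type) [∀ j, LinearOrder (L j)]
    (h : ∀ j, OmegaIPlus i (L j))
    (c : ℚ → ι) (hc : DenseColoring c)
    (s : Set (Lex ((x : ℚ) × L (c x)))) (hs : s.OrdConnected)
    (hiso : Nonempty (↥s ≃o Lex (Fin (i + 1) × ℕ))) :
    ∃ (j : ι) (K' : Type) (_ : LinearOrder K'),
      Nonempty (L j ≃o (Lex (Fin (i + 1) × ℕ) ⊕ₗ K')) := by
  classical
  obtain ⟨g⟩ := hiso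
  haveI := lexWF (i + 1)
  -- each L j is nonempty
  have hne : ∀ j, Nonempty (L j) := by
    intro j
    obtain ⟨K, instK, ⟨e⟩, -⟩ := h j
    exact ⟨e.symm (toLex (Sum.inl (toLex (⟨⟨0, hi⟩, 0⟩ : Fin i × ℕ))))⟩
  -- all elements of s have the same first component
  have key : ∀ a, a ∈ s → ∀ b, b ∈ s → a.1 < b.1 → False := by
    intro a ha b hb hlt
    have hd : (0 : ℚ) < b.1 - a.1 := by linarith
    set f : ℕ → ℚ := fun n => a.1 + (b.1 - a.1) / (n + 2) with hf
    have hfa : ∀ n : ℕ, a.1 < f n := by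
      intro n
      have : (0 : ℚ) < (b.1 - a.1) / (n + 2) := by positivity
      simp only [hf]; linarith
    have hfb : ∀ n : ℕ, f n < b.1 := by
      intro n
      have h2 : (1 : ℚ) < (n : ℚ) + 2 := by
        have : (0 : ℚ) ≤ (n : ℚ) := n.cast_nonneg
        linarith
      have : (b.1 - a.1) / (n + 2) < b.1 - a.1 := by
        rw [div_lt_iff₀ (by positivity)]
        nlinarith
      simp only [hf]; linarith
    have hdec : ∀ n : ℕ, f (n + 1) < f n := by
      intro n
      have : (b.1 - a.1) / ((n : ℚ) + 1 + 2) < (b.1 - a.1) / (n + 2) := by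
        apply div_lt_div_of_pos_left hd (by positivity)
        linarith
      simp only [hf]
      push_cast
      linarith
    set p : ℕ → Lex ((x : ℚ) × L (c x)) := fun n => toLex ⟨f n, (hne (c (f n))).some⟩ with hp
    have hap : ∀ n, a < p n := fun n => Sigma.Lex.lt_def.2 (Or.inl (hfa n))
    have hpb : ∀ n, p n < b := fun n => Sigma.Lex.lt_def.2 (Or.inl (hfb n))
    have hmem : ∀ n, p n ∈ s := fun n => hs.out ha hb ⟨(hap n).le, (hpb n).le⟩
    have hpdec : ∀ n, p (n + 1) < p n := fun n => Sigma.Lex.lt_def.2 (Or.inl (hdec n))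
    exact no_descending (fun n => g ⟨p n, hmem n⟩)
      (fun n => g.strictMono (Subtype.mk_lt_mk.2 (hpdec n)))
  -- pick a point of s
  set a₀ : ↥s := g.symm (toLex (0, 0)) with ha₀
  obtain ⟨q, hq⟩ : ∃ q : ℚ, ∀ a ∈ s, (a : Lex ((x : ℚ) × L (c x))).1 = q := by
    refine ⟨(a₀ : Lex ((x : ℚ) × L (c x))).1, fun a ha => ?_⟩
    rcases lt_trichotomy (a : Lex ((x : ℚ) × L (c x))).1 (a₀ : Lex ((x : ℚ) × L (c x))).1
      with hlt | heq | hgt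
    · exact absurd (key a ha a₀ a₀.2 hlt) not_false
    · exact heq
    · exact absurd (key a₀ a₀.2 a ha hgt) not_false
  set j : ι := c q with hj
  set s₀ : Set (L j) := {y | toLex (⟨q, y⟩ : (x : ℚ) × L (c x)) ∈ s} with hs₀def
  -- the isomorphism between s₀ and s
  have hmono₀ : StrictMono (fun y : ↥s₀ => (⟨toLex ⟨q, y.1⟩, y.2⟩ : ↥s)) := by
    intro y y' hyy'
    exact Subtype.mk_lt_mk.2 (Sigma.Lex.lt_def.2 (Or.inr ⟨rfl, hyy'⟩))
  have hsurj₀ : Function.Surjective (fun y : ↥s₀ => (⟨toLex ⟨q, y.1⟩, y.2⟩ : ↥s)) := by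
    rintro ⟨b, hb⟩
    rcases hxy : ofLex b with ⟨x, y⟩
    have hx : x = q := by
      have h1 : b.1 = x := congrArg Sigma.fst hxy
      rw [← h1]; exact hq b hb
    subst hx
    have hb2 : toLex (⟨x, y⟩ : (x : ℚ) × L (c x)) ∈ s := by
      rw [← hxy, toLex_ofLex]; exact hb
    refine ⟨⟨y, hb2⟩, Subtype.ext ?_⟩
    show toLex (⟨x, y⟩ : (x : ℚ) × L (c x)) = b
    rw [← hxy, toLex_ofLex]
  have e₀ : ↥s₀ ≃o ↥s := StrictMono.orderIsoOfSurjective _ hmono₀ hsurj₀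
  have hs₀oc : s₀.OrdConnected := by
    constructor
    intro y1 h1 y2 h2 z hz
    exact hs.out h1 h2 ⟨Sigma.Lex.le_def.2 (Or.inr ⟨rfl, hz.1⟩),
      Sigma.Lex.le_def.2 (Or.inr ⟨rfl, hz.2⟩)⟩
  have g₀ : ↥s₀ ≃o Lex (Fin (i + 1) × ℕ) := e₀.trans g
  obtain ⟨K, instK, ⟨e⟩, hK⟩ := h j
  -- transfer to the sum decomposition
  set T : Set (Lex (Fin i × ℕ) ⊕ₗ K) := (fun y => e y) '' s₀ with hTdef
  have hToc : T.OrdConnected := ordConnected_image e hs₀oc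
  have hmonoT : StrictMono (fun y : ↥s₀ => (⟨e y.1, ⟨y.1, y.2, rfl⟩⟩ : ↥T)) := by
    intro y y' hyy'
    exact Subtype.mk_lt_mk.2 (e.strictMono hyy')
  have hsurjT : Function.Surjective (fun y : ↥s₀ => (⟨e y.1, ⟨y.1, y.2, rfl⟩⟩ : ↥T)) := by
    rintro ⟨t, y, hy, rfl⟩
    exact ⟨⟨y, hy⟩, rfl⟩
  have eT : ↥s₀ ≃o ↥T := StrictMono.orderIsoOfSurjective _ hmonoT hsurjT
  have gT : ↥T ≃o Lex (Fin (i + 1) × ℕ) := eT.symm.trans g₀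
  set A : Set (Lex (Fin i × ℕ)) := {x | toLex (Sum.inl x) ∈ T} with hAdef
  set B : Set K := {y | toLex (Sum.inr y) ∈ T} with hBdef
  rcases Set.eq_empty_or_nonempty A with hA | ⟨x₀, hx₀⟩
  · -- A empty : T lives in K, contradiction with hK
    exfalso
    have hmonoB : StrictMono (fun y : ↥B => (⟨toLex (Sum.inr y.1), y.2⟩ : ↥T)) := by
      intro y y' hyy'
      exact Subtype.mk_lt_mk.2 (Sum.Lex.inr_lt_inr_iff.2 hyy')
    have hsurjB : Function.Surjective (fun y : ↥B => (⟨toLex (Sum.inr y.1), y.2⟩ : ↥T)) := by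
      rintro ⟨t, ht⟩
      rcases hxy : ofLex t with x | y
      · exfalso
        have : x ∈ A := by
          show toLex (Sum.inl x) ∈ T
          rw [← hxy, toLex_ofLex]; exact ht
        rw [hA] at this; exact this
      · have ht2 : toLex (Sum.inr y) ∈ T := by rw [← hxy, toLex_ofLex]; exact ht
        refine ⟨⟨y, ht2⟩, Subtype.ext ?_⟩
        show toLex (Sum.inr y) = t
        rw [← hxy, toLex_ofLex]
    have eB : ↥B ≃o ↥T := StrictMono.orderIsoOfSurjective _ hmonoB hsurjB
    have gB : ↥B ≃o Lex (Fin (i + 1) × ℕ) := eB.trans gT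
    have hBoc : B.OrdConnected := by
      constructor
      intro y1 h1 y2 h2 z hz
      exact hToc.out h1 h2 ⟨Sum.Lex.inr_le_inr_iff.2 hz.1, Sum.Lex.inr_le_inr_iff.2 hz.2⟩
    set ψ := omegaSuccIso i with hψ
    set ζ : Lex (Fin i × ℕ) → K := fun p => (gB.symm (ψ (toLex (inl p))) : ↥B).1 with hζ
    have hζB : ∀ p, ζ p ∈ B := fun p => (gB.symm (ψ (toLex (inl p)))).2
    have hζmono : StrictMono ζ := by
      intro p p' hpp'
      have : gB.symm (ψ (toLex (inl p))) < gB.symm (ψ (toLex (inl p'))) :=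
        gB.symm.strictMono (ψ.strictMono (Sum.Lex.inl_lt_inl_iff.2 hpp'))
      exact this
    have hCoc : (Set.range ζ).OrdConnected := by
      constructor
      rintro _ ⟨p1, rfl⟩ _ ⟨p2, rfl⟩ z hz
      have hzB : z ∈ B := hBoc.out (hζB p1) (hζB p2) hz
      have hle : gB ⟨z, hzB⟩ ≤ ψ (toLex (inl p2)) := by
        have h1 : (⟨z, hzB⟩ : ↥B) ≤ gB.symm (ψ (toLex (inl p2))) := hz.2
        have := gB.monotone h1
        rwa [OrderIso.apply_symm_apply] at this
      have hle2 : ψ.symm (gB ⟨z, hzB⟩) ≤ toLex (inl p2) := by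
        have := ψ.symm.monotone hle
        rwa [OrderIso.symm_apply_apply] at this
      rcases hv : ofLex (ψ.symm (gB ⟨z, hzB⟩)) with p' | n
      · refine ⟨p', ?_⟩
        have h2 : ψ (toLex (inl p')) = gB ⟨z, hzB⟩ := by
          rw [← hv, toLex_ofLex, OrderIso.apply_symm_apply]
        show (gB.symm (ψ (toLex (inl p'))) : ↥B).1 = z
        rw [h2, OrderIso.symm_apply_apply]
      · exfalso
        have : toLex (Sum.inr n) ≤ toLex (Sum.inl p2) := by
          rw [← hv, toLex_ofLex]; exact hle2
        exact Sum.Lex.not_inr_le_inl this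
    exact absurd ⟨(hζmono.orderIso ζ).symm⟩ (hK (Set.range ζ) hCoc)
  · -- A nonempty
    have hBdown : ∀ y ∈ B, ∀ z : K, z ≤ y → z ∈ B := by
      intro y hy z hz
      exact hToc.out hx₀ hy ⟨Sum.Lex.inl_le_inr _ _, Sum.Lex.inr_le_inr_iff.2 hz⟩
    rcases Set.eq_empty_or_nonempty B with hB | ⟨y₀, hy₀⟩
    · -- B empty : T lives in ω·i, contradiction with no_emb
      exfalso
      have hφex : ∀ p : Lex (Fin (i + 1) × ℕ), ∃ x : Lex (Fin i × ℕ),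
          ((gT.symm p : ↥T) : Lex (Fin i × ℕ) ⊕ₗ K) = toLex (Sum.inl x) := by
        intro p
        rcases hxy : ofLex ((gT.symm p : ↥T) : Lex (Fin i × ℕ) ⊕ₗ K) with x | y
        · exact ⟨x, by rw [← toLex_ofLex ((gT.symm p : ↥T) : Lex (Fin i × ℕ) ⊕ₗ K), hxy]⟩
        · exfalso
          have : y ∈ B := by
            show toLex (Sum.inr y) ∈ T
            rw [← hxy, toLex_ofLex]
            exact (gT.symm p).2
          rw [hB] at this; exact this
      choose φ hφ using hφex
      have hφmono : StrictMono φ := by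
        intro p p' hpp'
        have h1 : ((gT.symm p : ↥T) : Lex (Fin i × ℕ) ⊕ₗ K) <
            ((gT.symm p' : ↥T) : Lex (Fin i × ℕ) ⊕ₗ K) := gT.symm.strictMono hpp'
        rw [hφ p, hφ p'] at h1
        exact Sum.Lex.inl_lt_inl_iff.1 h1
      exact no_emb i (OrderEmbedding.ofStrictMono φ hφmono)
    · -- B nonempty : extract the initial ω-segment
      set F : Set (Lex (Fin (i + 1) × ℕ)) :=
        {p | ∃ y ∈ B, ((gT.symm p : ↥T) : Lex (Fin i × ℕ) ⊕ₗ K) = toLex (Sum.inr y)} with hFdef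
      have hF0 : gT ⟨toLex (Sum.inr y₀), hy₀⟩ ∈ F :=
        ⟨y₀, hy₀, by rw [OrderIso.symm_apply_apply]⟩
      have hFup : ∀ p ∈ F, ∀ p', p ≤ p' → p' ∈ F := by
        rintro p ⟨y, hy, hval⟩ p' hpp'
        rcases hxy : ofLex ((gT.symm p' : ↥T) : Lex (Fin i × ℕ) ⊕ₗ K) with x | y'
        · exfalso
          have h1 : ((gT.symm p : ↥T) : Lex (Fin i × ℕ) ⊕ₗ K) ≤
              ((gT.symm p' : ↥T) : Lex (Fin i × ℕ) ⊕ₗ K) := gT.symm.monotone hpp'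
          rw [hval, ← toLex_ofLex ((gT.symm p' : ↥T) : Lex (Fin i × ℕ) ⊕ₗ K), hxy] at h1
          exact Sum.Lex.not_inr_le_inl h1
        · refine ⟨y', ?_, by rw [← toLex_ofLex ((gT.symm p' : ↥T) : Lex (Fin i × ℕ) ⊕ₗ K), hxy]⟩
          show toLex (Sum.inr y') ∈ T
          rw [← hxy, toLex_ofLex]
          exact (gT.symm p').2
      set m₀ := WellFounded.min (wellFounded_lt) F ⟨_, hF0⟩ with hm₀def
      have hm₀F : m₀ ∈ F := WellFounded.min_mem _ F _
      have hm₀le : ∀ p ∈ F, m₀ ≤ p := fun p hp =>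
        not_lt.1 (WellFounded.not_lt_min (wellFounded_lt) F hp)
      set k := (ofLex m₀).1 with hk
      set n := (ofLex m₀).2 with hn
      have hm₀ : m₀ = toLex (k, n) := rfl
      have hmemF : ∀ t : ℕ, toLex (k, n + t) ∈ F := by
        intro t
        refine hFup m₀ hm₀F _ ?_
        rw [hm₀]
        exact Prod.Lex.le_iff.2 (Or.inr ⟨rfl, Nat.le_add_right n t⟩)
      have huex : ∀ t : ℕ, ∃ y, y ∈ B ∧
          ((gT.symm (toLex (k, n + t)) : ↥T) : Lex (Fin i × ℕ) ⊕ₗ K) = toLex (Sum.inr y) := by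
        intro t
        obtain ⟨y, hy, hval⟩ := hmemF t
        exact ⟨y, hy, hval⟩
      choose u hu₁ hu₂ using huex
      have humono : StrictMono u := by
        intro t t' htt'
        have h1 : toLex ((k, n + t) : Fin (i + 1) × ℕ) < toLex (k, n + t') :=
          Prod.Lex.lt_iff.2 (Or.inr ⟨rfl, by show n + t < n + t'; omega⟩)
        have h2 : ((gT.symm (toLex (k, n + t)) : ↥T) : Lex (Fin i × ℕ) ⊕ₗ K) <
            ((gT.symm (toLex (k, n + t')) : ↥T) : Lex (Fin i × ℕ) ⊕ₗ K) :=
          gT.symm.strictMono h1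
        rw [hu₂ t, hu₂ t'] at h2
        exact Sum.Lex.inr_lt_inr_iff.1 h2
      have hWdown : ∀ ⦃a z : K⦄, a ∈ Set.range u → z ≤ a → z ∈ Set.range u := by
        rintro _ z ⟨t, rfl⟩ hz
        rcases eq_or_lt_of_le hz with rfl | hzlt
        · exact ⟨t, rfl⟩
        have hzB : z ∈ B := hBdown (u t) (hu₁ t) z hz
        have hpzF : gT ⟨toLex (Sum.inr z), hzB⟩ ∈ F :=
          ⟨z, hzB, by rw [OrderIso.symm_apply_apply]⟩
        have hle : m₀ ≤ gT ⟨toLex (Sum.inr z), hzB⟩ := hm₀le _ hpzF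
        have hmemT : toLex (Sum.inr (u t)) ∈ T := by
          rw [← hu₂ t]; exact (gT.symm (toLex (k, n + t))).2
        have hgt : toLex ((k, n + t) : Fin (i + 1) × ℕ) = gT ⟨toLex (Sum.inr (u t)), hmemT⟩ := by
          have h3 : gT.symm (toLex (k, n + t)) = ⟨toLex (Sum.inr (u t)), hmemT⟩ :=
            Subtype.ext (hu₂ t)
          rw [← h3, OrderIso.apply_symm_apply]
        have hlt : gT ⟨toLex (Sum.inr z), hzB⟩ < toLex (k, n + t) := by
          rw [hgt]
          exact gT.strictMono (Subtype.mk_lt_mk.2 (Sum.Lex.inr_lt_inr_iff.2 hzlt))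
        -- analyze coordinates
        set pz := gT ⟨toLex (Sum.inr z), hzB⟩ with hpzdef
        have hfst : (ofLex pz).1 = k ∧ n ≤ (ofLex pz).2 ∧ (ofLex pz).2 < n + t := by
          rcases Prod.Lex.lt_iff.1 hlt with h1 | ⟨h1, h2⟩
          · rcases Prod.Lex.le_iff.1 hle with h3 | ⟨h3, h4⟩
            · exact absurd (h3.trans h1) (lt_irrefl _)
            · exact absurd (h3 ▸ h1) (lt_irrefl _)
          · rcases Prod.Lex.le_iff.1 hle with h3 | ⟨h3, h4⟩
            · exact absurd (h1 ▸ h3) (lt_irrefl _)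
            · exact ⟨h1, h4, h2⟩
        obtain ⟨hfst1, hfst2, hfst3⟩ := hfst
        refine ⟨(ofLex pz).2 - n, ?_⟩
        have hpz : pz = toLex (k, n + ((ofLex pz).2 - n)) := by
          have h6 : (ofLex pz) = (k, n + ((ofLex pz).2 - n)) := by
            have h7 : n + ((ofLex pz).2 - n) = (ofLex pz).2 := by omega
            rw [h7]
            exact Prod.ext hfst1 rfl
          conv_lhs => rw [← toLex_ofLex pz, h6]
        have h4 : gT.symm pz = ⟨toLex (Sum.inr z), hzB⟩ := OrderIso.symm_apply_apply _ _
        have h5 : ((gT.symm pz : ↥T) : Lex (Fin i × ℕ) ⊕ₗ K) = toLex (Sum.inr z) := by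
          rw [h4]
        rw [hpz, hu₂ ((ofLex pz).2 - n)] at h5
        have := toLex_inj.1 h5
        exact (Sum.inr.inj this)
      refine ⟨j, ↥(Set.range u)ᶜ, inferInstance, ⟨?_⟩⟩
      refine e.trans ?_
      refine (sumLexCongrIso (OrderIso.refl _) (splitIso (Set.range u) hWdown)).trans ?_
      refine ((OrderIso.sumLexAssoc _ _ _).symm).trans ?_
      refine (sumLexCongrIso (sumLexCongrIso (OrderIso.refl _) (humono.orderIso u).symm)
        (OrderIso.refl _)).trans ?_
      exact sumLexCongrIso (omegaSuccIso i) (OrderIso.refl _)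
end

section
/- The lexicographic order on the language σ(D) = ({0,1}*1D)⁺ is a countable dense linear order without endpoints, hence isomorphic to (ℚ, ≤); moreover the coloring c : σ(D) → D sending x·1·u (with u ∈ D the final D-factor) to u is a dense D-coloring of (σ(D), ≤_lex). -/
open Computability

/-- Words over `{0,1}` (here `{z, o}`). -/
def Bwords {α : Type} (z o : α) : Language α := {w | ∀ a ∈ w, a = z ∨ a = o}

/-- The language `{0,1}*1D`. -/
def blockL {α : Type} (z o : α) (D : Language α) : Language α :=
  Bwords z o * ({[o]} : Language α) * D

/-- The language `σ(D) = ({0,1}*1D)⁺`. -/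
def sigmaL {α : Type} (z o : α) (D : Language α) : Language α :=
  blockL z o D * (blockL z o D)∗

/-- The language `({0,1}*1D)* {0,1}*` of possible prefixes preceding the final `1·u`
factor. -/
def prefixL {α : Type} (z o : α) (D : Language α) : Language α :=
  (blockL z o D)∗ * Bwords z o

section Aux

variable {α : Type} [LinearOrder α]

/-- A proper prefix is lexicographically smaller. -/
theorem lex_append_cons (l : List α) (a : α) (t : List α) :
    List.Lex (· < ·) l (l ++ a :: t) := by
  induction l with
  | nil => exact List.Lex.nil
  | cons b l ih => exact List.Lex.cons ih

theorem lex_append_left {l m : List α} (h : List.Lex (· < ·) l m) (w : List α) :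
    List.Lex (· < ·) (w ++ l) (w ++ m) := by
  induction w with
  | nil => exact h
  | cons b w ih => exact List.Lex.cons ih

theorem lex_of_rel {a b : α} (h : a < b) (p s t : List α) :
    List.Lex (· < ·) (p ++ a :: s) (p ++ b :: t) :=
  lex_append_left (List.Lex.rel h) p

theorem lex_replicate {z a : α} (h : z < a) (m : ℕ) (s t : List α) :
    List.Lex (· < ·) (List.replicate (m + 1) z ++ s) (List.replicate m z ++ a :: t) := by
  induction m with
  | zero => exact List.Lex.rel h
  | succ m ih => exact List.Lex.cons ih

/-- Trichotomy-like decomposition of a strict lexicographic inequality. -/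
theorem lex_cases {w₁ w₂ : List α} (h : List.Lex (· < ·) w₁ w₂) :
    (∃ a t, w₂ = w₁ ++ a :: t) ∨
      ∃ p a b s t, a < b ∧ w₁ = p ++ a :: s ∧ w₂ = p ++ b :: t := by
  induction h with
  | nil => exact Or.inl ⟨_, _, rfl⟩
  | @rel a l b m h => exact Or.inr ⟨[], a, b, l, m, h, rfl, rfl⟩
  | @cons a l m _ ih =>
    rcases ih with ⟨b, t, rfl⟩ | ⟨p, x, y, s, t, hxy, h1, h2⟩
    · exact Or.inl ⟨b, t, rfl⟩
    · exact Or.inr ⟨a :: p, x, y, s, t, hxy, by rw [h1]; rfl, by rw [h2]; rfl⟩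

/-- A list with some element distinct from `z` splits as `z^j ++ a :: s` with `a ≠ z`. -/
theorem split_replicate {z : α} {t : List α} (ht : ∃ a ∈ t, a ≠ z) :
    ∃ j a s, a ≠ z ∧ t = List.replicate j z ++ a :: s := by
  induction t with
  | nil => simp at ht
  | cons b t ih =>
    by_cases hb : b = z
    · subst hb
      have ht' : ∃ a ∈ t, a ≠ b := by
        rcases ht with ⟨a, ha, haz⟩
        rcases List.mem_cons.mp ha with rfl | ha'
        · exact absurd rfl haz
        · exact ⟨a, ha', haz⟩
      obtain ⟨j, a, s, haz, rfl⟩ := ih ht'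
      exact ⟨j + 1, a, s, haz, by simp [List.replicate_succ]⟩
    · exact ⟨0, b, t, hb, by simp⟩

end Aux

section Lang

variable {α : Type} [LinearOrder α] {z o : α} {G : Set α} {D : Language α}

theorem mem_blockL_of (x : List α) (hx : x ∈ Bwords z o) {u : List α} (hu : u ∈ D) :
    x ++ o :: u ∈ blockL z o D := by
  have h1 : x ++ [o] ∈ Bwords z o * ({[o]} : Language α) :=
    Language.append_mem_mul hx rfl
  have := Language.append_mem_mul h1 hu
  simpa [blockL] using this

theorem replicate_mem_Bwords (k : ℕ) : List.replicate k z ∈ Bwords z o := by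
  intro a ha
  exact Or.inl (List.eq_of_mem_replicate ha)

theorem nil_mem_Bwords : ([] : List α) ∈ Bwords z o := by
  intro a ha
  exact absurd ha (by simp)

theorem sigmaL_append_block {w b : List α} (hw : w ∈ sigmaL z o D)
    (hb : b ∈ blockL z o D) : w ++ b ∈ sigmaL z o D := by
  rcases hw with ⟨b₀, hb₀, r, hr, rfl⟩
  rcases Language.mem_kstar.mp hr with ⟨L, rfl, hL⟩
  have hflat : L.flatten ++ b = (L ++ [b]).flatten := by simp
  rw [List.append_assoc, hflat]
  exact Language.append_mem_mul hb₀ (Language.join_mem_kstar (by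
    intro y hy
    rcases List.mem_append.mp hy with hy | hy
    · exact hL y hy
    · rw [List.mem_singleton.mp hy]; exact hb))

theorem sigmaL_sub_kstar {w : List α} (hw : w ∈ sigmaL z o D) :
    w ∈ (blockL z o D)∗ := by
  rcases hw with ⟨b₀, hb₀, r, hr, rfl⟩
  rcases Language.mem_kstar.mp hr with ⟨L, rfl, hL⟩
  show b₀ ++ L.flatten ∈ _
  have : b₀ ++ L.flatten = (b₀ :: L).flatten := by simp
  rw [this]
  exact Language.join_mem_kstar (by
    intro y hy
    rcases List.mem_cons.mp hy with rfl | hy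
    · exact hb₀
    · exact hL y hy)

theorem block_mem_sigmaL {b : List α} (hb : b ∈ blockL z o D) : b ∈ sigmaL z o D := by
  have := Language.append_mem_mul hb (Language.nil_mem_kstar (blockL z o D))
  simpa [sigmaL] using this

/-- Letters of words in `sigmaL` are `z`, `o`, or from `G`. -/
theorem sigmaL_letters (hDG : ∀ w ∈ D, ∀ a ∈ w, a ∈ G)
    {w : List α} (hw : w ∈ sigmaL z o D) : ∀ a ∈ w, a = z ∨ a = o ∨ a ∈ G := by
  have hblock : ∀ b ∈ blockL z o D, ∀ a ∈ b, a = z ∨ a = o ∨ a ∈ G := by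
    rintro b ⟨c, ⟨x, hx, y, hy, rfl⟩, u, hu, rfl⟩ a ha
    rcases List.mem_append.mp ha with ha | ha
    · rcases List.mem_append.mp ha with ha | ha
      · rcases hx a ha with h | h
        · exact Or.inl h
        · exact Or.inr (Or.inl h)
      · rcases hy with rfl
        exact Or.inr (Or.inl (by simpa using ha))
    · exact Or.inr (Or.inr (hDG u hu a ha))
  rcases hw with ⟨b₀, hb₀, r, hr, rfl⟩
  rcases Language.mem_kstar.mp hr with ⟨L, rfl, hL⟩
  intro a ha
  rcases List.mem_append.mp ha with ha | ha
  · exact hblock b₀ hb₀ a ha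
  · rcases List.mem_flatten.mp ha with ⟨y, hy, hay⟩
    exact hblock y (hL y hy) a hay

/-- Every word of `sigmaL` has the form `z^m ++ o :: s`. -/
theorem sigmaL_shape (hzo : z < o) {w : List α} (hw : w ∈ sigmaL z o D) :
    ∃ m s, w = List.replicate m z ++ o :: s := by
  rcases hw with ⟨b₀, ⟨c, ⟨x, hx, y, hy, rfl⟩, u, hu, rfl⟩, r, hr, rfl⟩
  rcases hy with rfl
  clear hr
  induction x with
  | nil => exact ⟨0, u ++ r, by simp⟩
  | cons a x ih =>
    rcases hx a (by simp) with rfl | h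
    · obtain ⟨m, s, hms⟩ := ih (fun b hb => hx b (List.mem_cons_of_mem _ hb))
      refine ⟨m + 1, s, ?_⟩
      simp only [List.replicate_succ, List.cons_append] at hms ⊢
      rw [← hms]
    · exact ⟨0, x ++ [o] ++ u ++ r, by simp [h]⟩

theorem cons_z_mem_sigmaL {w : List α} (hw : w ∈ sigmaL z o D) :
    z :: w ∈ sigmaL z o D := by
  rcases hw with ⟨b₀, ⟨c, ⟨x, hx, y, hy, rfl⟩, u, hu, rfl⟩, r, hr, rfl⟩
  have hx' : z :: x ∈ Bwords z o := by
    intro a ha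
    rcases List.mem_cons.mp ha with rfl | ha
    · exact Or.inl rfl
    · exact hx a ha
  refine ⟨z :: (x ++ y ++ u), ?_, r, hr, by simp⟩
  exact ⟨z :: (x ++ y), Language.append_mem_mul hx' hy, u, hu, by simp⟩

end Lang

section Density

variable {α : Type} [LinearOrder α] {z o : α} {G : Set α} {D : Language α}

theorem sigmaL_density (hzo : z < o) (hG : ∀ g ∈ G, z < g ∧ g ≠ o)
    (hDG : ∀ w ∈ D, ∀ a ∈ w, a ∈ G) :
    ∀ w₁ ∈ sigmaL z o D, ∀ w₂ ∈ sigmaL z o D, w₁ < w₂ → ∀ u ∈ D,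
      ∃ x ∈ prefixL z o D,
        w₁ < x ++ o :: u ∧ x ++ o :: u < w₂ ∧ x ++ o :: u ∈ sigmaL z o D := by
  intro w₁ hw₁ w₂ hw₂ hlt u hu
  have hletters := sigmaL_letters (G := G) hDG hw₂
  have hlex : List.Lex (· < ·) w₁ w₂ := hlt
  rcases lex_cases hlex with ⟨a, t, rfl⟩ | ⟨p, a, b, s, t, hab, h1, h2⟩
  · -- w₂ = w₁ ++ a :: t : proper prefix case
    -- the tail `a :: t` contains a letter ≠ z (its last letter)
    have hne : ∃ c ∈ a :: t, c ≠ z := by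
      have hne' : (a :: t) ≠ [] := by simp
      refine ⟨(a :: t).getLast hne', List.getLast_mem hne', ?_⟩
      -- the last letter of w₂ equals the last letter of its last block
      rcases hw₂ with ⟨b₀, hb₀, r, hr, hw2eq⟩
      rcases Language.mem_kstar.mp hr with ⟨L, rfl, hL⟩
      have hlastblk : ∃ blk ∈ blockL z o D, ∃ pre, w₁ ++ a :: t = pre ++ blk := by
        rcases List.eq_nil_or_concat L with rfl | ⟨L', blk, rfl⟩
        · exact ⟨b₀, hb₀, [], by simpa using hw2eq.symm⟩
        · refine ⟨blk, hL blk (by simp), b₀ ++ L'.flatten, ?_⟩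
          rw [← hw2eq]; simp
      obtain ⟨blk, hblk, pre, heq⟩ := hlastblk
      rcases hblk with ⟨cc, ⟨x, hx, y, hy, rfl⟩, v, hv, rfl⟩
      rcases hy with rfl
      have hblkne : x ++ [o] ++ v ≠ [] := by simp
      have h1 : (a :: t).getLast hne' = (w₁ ++ a :: t).getLast (by simp) := by
        rw [List.getLast_append_right (l := w₁) hne']
      have h2 : (w₁ ++ a :: t).getLast (by simp) =
          (x ++ [o] ++ v).getLast hblkne := by
        rw [← List.getLast_append_right (l := pre) hblkne]
        congr 1
      rw [h1, h2]
      rcases List.eq_nil_or_concat' v with rfl | ⟨v', d, rfl⟩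
      · have : (x ++ [o] ++ ([] : List α)).getLast hblkne = o := by
          simp
        rw [this]; exact ne_of_gt hzo
      · have he : x ++ [o] ++ (v' ++ [d]) = (x ++ [o] ++ v') ++ [d] := by simp
        have : (x ++ [o] ++ (v' ++ [d])).getLast hblkne = d := by
          simp only [he]
          exact List.getLast_append_singleton _
        rw [this]
        exact ne_of_gt (hG d (hDG _ hv d (by simp))).1
    obtain ⟨j, c, s, hcz, hdec⟩ := split_replicate hne
    have hzc : z < c := by
      have hcmem : c ∈ w₁ ++ a :: t := by
        rw [hdec]; exact List.mem_append_right _ (List.mem_append_right _ (by simp))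
      rcases hletters c hcmem with rfl | rfl | hcG
      · exact absurd rfl hcz
      · exact hzo
      · exact (hG c hcG).1
    refine ⟨w₁ ++ List.replicate (j + 1) z, ?_, ?_, ?_, ?_⟩
    · exact Language.append_mem_mul (sigmaL_sub_kstar hw₁) (replicate_mem_Bwords _)
    · show List.Lex (· < ·) w₁ _
      rw [List.append_assoc]
      have : List.replicate (j + 1) z ++ o :: u =
          z :: (List.replicate j z ++ o :: u) := by simp [List.replicate_succ]
      rw [this]
      exact lex_append_cons _ _ _
    · show List.Lex (· < ·) _ (w₁ ++ a :: t)
      rw [List.append_assoc, hdec]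
      exact lex_append_left (lex_replicate hzc j _ _) w₁
    · rw [List.append_assoc]
      exact sigmaL_append_block hw₁
        (mem_blockL_of _ (replicate_mem_Bwords _) hu)
  · -- differing-letter case: anything extending w₁ is < w₂
    refine ⟨w₁, ?_, ?_, ?_, ?_⟩
    · have := Language.append_mem_mul (sigmaL_sub_kstar hw₁)
        (nil_mem_Bwords (z := z) (o := o))
      simpa [prefixL] using this
    · exact lex_append_cons _ _ _
    · show List.Lex (· < ·) _ _
      rw [h1, h2, List.append_assoc]
      exact lex_of_rel hab p _ _
    · exact sigmaL_append_block hw₁ (mem_blockL_of [] nil_mem_Bwords hu)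

end Density

/-- The lexicographic order on `σ(D) = ({0,1}*1D)⁺` is a countable dense linear order
without endpoints, hence isomorphic to `(ℚ, ≤)`; moreover the coloring sending `x·1·u`
(with `u ∈ D` the final `D`-factor) to `u` is a dense `D`-coloring: every `u ∈ D` occurs
as a final factor of some word strictly between any two given words of `σ(D)`. -/
theorem sigmaL_dense_coloring {α : Type} [LinearOrder α] [Countable α]
    (z o : α) (G : Set α) (D : Language α)
    (hzo : z < o) (hG : ∀ g ∈ G, z < g ∧ g ≠ o)
    (hD : D.Nonempty) (hDG : ∀ w ∈ D, ∀ a ∈ w, a ∈ G) :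
    Nonempty ({w : List α // w ∈ sigmaL z o D} ≃o ℚ) ∧
    ∀ w₁ ∈ sigmaL z o D, ∀ w₂ ∈ sigmaL z o D, w₁ < w₂ → ∀ u ∈ D,
      ∃ x ∈ prefixL z o D,
        w₁ < x ++ o :: u ∧ x ++ o :: u < w₂ ∧ x ++ o :: u ∈ sigmaL z o D := by
  obtain ⟨u₀, hu₀⟩ := hD
  have key := sigmaL_density (G := G) (D := D) hzo hG hDG
  constructor
  · set S := {w : List α // w ∈ sigmaL z o D}
    have hne : Nonempty S := by
      refine ⟨⟨o :: u₀, ?_⟩⟩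
      have := block_mem_sigmaL (z := z) (o := o)
        (mem_blockL_of [] nil_mem_Bwords hu₀)
      simpa using this
    have hdense : DenselyOrdered S := by
      constructor
      rintro ⟨w₁, hw₁⟩ ⟨w₂, hw₂⟩ h
      obtain ⟨x, hx, h1, h2, hmem⟩ := key w₁ hw₁ w₂ hw₂ h u₀ hu₀
      exact ⟨⟨x ++ o :: u₀, hmem⟩, h1, h2⟩
    have hnomax : NoMaxOrder S := by
      constructor
      rintro ⟨w, hw⟩
      refine ⟨⟨w ++ o :: u₀, sigmaL_append_block hw
        (mem_blockL_of [] nil_mem_Bwords hu₀)⟩, ?_⟩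
      exact lex_append_cons _ _ _
    have hnomin : NoMinOrder S := by
      constructor
      rintro ⟨w, hw⟩
      refine ⟨⟨z :: w, cons_z_mem_sigmaL hw⟩, ?_⟩
      show List.Lex (· < ·) (z :: w) w
      obtain ⟨m, s, rfl⟩ := sigmaL_shape hzo hw
      have : z :: (List.replicate m z ++ o :: s) =
          List.replicate (m + 1) z ++ o :: s := by simp [List.replicate_succ]
      rw [this]
      exact lex_replicate hzo m _ _
    exact Order.iso_of_countable_dense S ℚ
  · exact key
end
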